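/- Consider the Big-Match game of type II with player 1's non-quitting actions {T,B}, player 2's quitting action L* and non-quitting action R, and scalar payoffs g(T,L*) = 1, g(T,R) = 1, g(B,L*) = 0, g(B,R) = −1. Then: (i) the set C = {0} ⊆ ℝ does not satisfy Condition (1) (equivalently, there is no x ∈ Δ({T,B}) with g(x,R) = 0 and g(x,L*) = 0); yet (ii) C = {0} is weakly approachable by player 1. Hence Condition (1) is not necessary for weak approachability in Big-Match games of type II, and (combining (i) with the characterization of uniform approachability) {0} is weakly but not uniformly approachable. -/

import Mathlib

noncomputable section

namespace Example5

/-- Payoffs: `true` = `T`, `false` = `B` for player 1 (both non-quitting);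
`true` = `L*` (quitting), `false` = `R` (non-quitting) for player 2.
`g(T,L*) = 1, g(T,R) = 1, g(B,L*) = 0, g(B,R) = −1`. -/
def g : Bool → Bool → ℝ := fun i j =>
  if i then 1 else (if j then 0 else -1)

/-- Bilinear extension of `g`. -/
def mix (x y : Bool → ℝ) : ℝ := ∑ i : Bool, ∑ j : Bool, x i * y j * g i j

/-- Measure of absorption `p*`: a pair `(i,j)` is absorbing iff `j = L*`. -/
def pstar (α β : Bool → ℝ) : ℝ := ∑ i : Bool, ∑ j : Bool, if j then α i * β j else 0

/-- Expected absorption payoff `g*`. -/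
def gstar (α β : Bool → ℝ) : ℝ := ∑ i : Bool, ∑ j : Bool, if j then α i * β j * g i j else 0

/-- `φ(x,α,y,β) = (g(x,y) + g*(α,y) + g*(x,β)) / (1 + p*(α,y) + p*(x,β))`. -/
def phi (x α y β : Bool → ℝ) : ℝ :=
  (1 + pstar α y + pstar x β)⁻¹ * (mix x y + gstar α y + gstar x β)

/-- The quantity of Condition (1): `max_y min_x inf_α sup_β d_C(φ(x,α,y,β))`. -/
def cond1Val (C : Set ℝ) : ℝ :=
  ⨆ y : stdSimplex ℝ Bool, ⨅ x : stdSimplex ℝ Bool,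
    ⨅ α : {a : Bool → ℝ // ∀ i, 0 ≤ a i}, ⨆ β : {b : Bool → ℝ // ∀ j, 0 ≤ b j},
      Metric.infDist (phi x.1 α.1 y.1 β.1) C

/-- A behavioral strategy assigns a probability (of `T`, resp. of `L*`) to each
unabsorbed history, recorded as the list of player 1's realized actions
(player 2 having played `R` so far). -/
def ValidStrat (σ : List Bool → ℝ) : Prop := ∀ h, σ h ∈ Set.Icc (0 : ℝ) 1

/-- Expected sum of the payoffs of the next `n` stages from the unabsorbed history `h`:
with probability `τ h` player 2 quits and the payoff `g(i,L*)` is frozen forever. -/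
def expTotal (σ τ : List Bool → ℝ) : ℕ → List Bool → ℝ
  | 0, _ => 0
  | n + 1, h =>
      τ h * (((n : ℝ) + 1) * (σ h * g true true + (1 - σ h) * g false true))
        + (1 - τ h) * (σ h * (g true false + expTotal σ τ n (h ++ [true]))
            + (1 - σ h) * (g false false + expTotal σ τ n (h ++ [false])))

/-- Expected average payoff over the first `T` stages. -/
def avg (σ τ : List Bool → ℝ) (T : ℕ) : ℝ := (T : ℝ)⁻¹ * expTotal σ τ T []

/-- `{0}` is weakly approachable by player 1. -/
def WeaklyApproachableZero : Prop :=
  ∀ ε > (0:ℝ), ∃ T₀ : ℕ, ∀ T ≥ T₀, ∃ σ : List Bool → ℝ, ValidStrat σ ∧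
    ∀ τ : List Bool → ℝ, ValidStrat τ → |avg σ τ T| ≤ ε

/-- `{0}` is uniformly approachable by player 1. -/
def UniformlyApproachableZero : Prop :=
  ∀ ε > (0:ℝ), ∃ σ : List Bool → ℝ, ValidStrat σ ∧ ∃ T₀ : ℕ, ∀ T ≥ T₀,
    ∀ τ : List Bool → ℝ, ValidStrat τ → |avg σ τ T| ≤ ε

lemma gTT : g true true = 1 := rfl
lemma gTR : g true false = 1 := rfl
lemma gBT : g false true = 0 := rfl
lemma gBR : g false false = -1 := rfl

lemma expTotal_succ (σ τ : List Bool → ℝ) (n : ℕ) (h : List Bool) :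
    expTotal σ τ (n+1) h =
      τ h * (((n : ℝ) + 1) * (σ h * g true true + (1 - σ h) * g false true))
        + (1 - τ h) * (σ h * (g true false + expTotal σ τ n (h ++ [true]))
            + (1 - σ h) * (g false false + expTotal σ τ n (h ++ [false]))) := rfl

def never : List Bool → ℝ := fun _ => 0
def quitAt (d : ℕ) : List Bool → ℝ := fun h => if h.length = d then 1 else 0

lemma never_valid : ValidStrat never := fun _ => ⟨le_refl _, zero_le_one⟩
lemma quitAt_valid (d : ℕ) : ValidStrat (quitAt d) := by
  intro h; unfold quitAt; split <;> norm_num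

/-- bound on never-quit totals -/
lemma abs_expTotal_never_le (σ : List Bool → ℝ) (hσ : ValidStrat σ) :
    ∀ n h, |expTotal σ never n h| ≤ (n : ℝ) := by
  intro n
  induction n with
  | zero => intro h; simp [expTotal]
  | succ n ih =>
    intro h
    have h1 := abs_le.1 (ih (h ++ [true]))
    have h2 := abs_le.1 (ih (h ++ [false]))
    have hs := hσ h
    simp only [Set.mem_Icc] at hs
    rw [expTotal_succ]
    simp only [never, gTT, gTR, gBT, gBR]
    set a := expTotal σ never n (h ++ [true]) with ha
    set b := expTotal σ never n (h ++ [false]) with hb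
    have e1 : σ h * (1 + a) ≤ σ h * (1 + n) :=
      mul_le_mul_of_nonneg_left (by linarith [h1.2]) hs.1
    have e2 : (1 - σ h) * (-1 + b) ≤ (1 - σ h) * (1 + n) :=
      mul_le_mul_of_nonneg_left (by linarith [h2.2]) (by linarith [hs.2])
    have e3 : σ h * (-(1 + (n:ℝ))) ≤ σ h * (1 + a) :=
      mul_le_mul_of_nonneg_left (by linarith [h1.1]) hs.1
    have e4 : (1 - σ h) * (-(1 + (n:ℝ))) ≤ (1 - σ h) * (-1 + b) :=
      mul_le_mul_of_nonneg_left (by linarith [h2.1]) (by linarith [hs.2])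
    push_cast
    rw [abs_le]
    constructor <;> nlinarith [e1, e2, e3, e4]

/-- key decomposition: quitting at depth k -/
lemma quit_decomp (σ : List Bool → ℝ) :
    ∀ k n (h : List Bool), k < n →
      expTotal σ (quitAt (h.length + k)) n h =
        expTotal σ never k h +
          ((n : ℝ) - k) * ((expTotal σ never (k+1) h - expTotal σ never k h + 1) / 2) := by
  intro k
  induction k with
  | zero =>
    intro n h hn
    obtain ⟨m, rfl⟩ : ∃ m, n = m + 1 := ⟨n - 1, by omega⟩
    have hq : quitAt (h.length + 0) h = 1 := by simp [quitAt]
    have e1 : expTotal σ never (0+1) h = σ h * 1 + (1 - σ h) * (-1) := by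
      rw [expTotal_succ]
      simp [never, expTotal, g]
    rw [expTotal_succ, hq, e1]
    show _ = expTotal σ never 0 h + _
    rw [expTotal]
    rw [gTT, gBT]
    push_cast
    ring
  | succ k ih =>
    intro n h hn
    obtain ⟨m, rfl⟩ : ∃ m, n = m + 1 := ⟨n - 1, by omega⟩
    have hq : quitAt (h.length + (k+1)) h = 0 := by simp [quitAt]
    have et : (h ++ [true]).length + k = h.length + (k+1) := by simp; omega
    have ef : (h ++ [false]).length + k = h.length + (k+1) := by simp; omega
    have iht := ih m (h ++ [true]) (by omega)
    have ihf := ih m (h ++ [false]) (by omega)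
    rw [et] at iht; rw [ef] at ihf
    rw [expTotal_succ, hq, iht, ihf]
    -- unfold the never expressions on the RHS one step
    have eN : ∀ j, expTotal σ never (j+1) h =
        σ h * (1 + expTotal σ never j (h ++ [true]))
          + (1 - σ h) * (-1 + expTotal σ never j (h ++ [false])) := by
      intro j
      rw [expTotal_succ]
      rw [gTR, gBR]
      show 0 * _ + (1 - 0) * _ = _
      ring
    rw [eN (k+1), eN k, gTR, gBR]
    push_cast
    ring



lemma not_unif : ¬ UniformlyApproachableZero := by
  intro H
  obtain ⟨σ, hσ, T₀, hH⟩ := H (1/4) (by norm_num)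
  set N : ℕ → ℝ := fun j => expTotal σ never j [] with hN
  set M : ℕ → ℝ := fun k => (N (k+1) - N k + 1) / 2 with hMdef
  have hM : ∀ k, M k ≤ 3/10 := by
    intro k
    set T' := max T₀ (26*(k+1)) with hT'
    have hT'0 : T₀ ≤ T' := le_max_left _ _
    have hT'k : 26*k + 26 ≤ T' := by
      have := le_max_right T₀ (26*(k+1)); omega
    have hkT' : k < T' := by omega
    have hdec := quit_decomp σ k T' [] hkT'
    simp only [List.length_nil, Nat.zero_add] at hdec
    have hdec' : expTotal σ (quitAt k) T' [] = N k + ((T':ℝ) - (k:ℝ)) * M k := by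
      rw [hMdef, hN]; exact hdec
    have habs := hH T' hT'0 (quitAt k) (quitAt_valid _)
    rw [avg, hdec'] at habs
    have hNk := abs_le.1 (abs_expTotal_never_le σ hσ k [])
    have hNk' : -(k:ℝ) ≤ N k ∧ N k ≤ (k:ℝ) := hNk
    have c1 : 26*(k:ℝ) + 26 ≤ (T':ℝ) := by exact_mod_cast hT'k
    have hk0 : (0:ℝ) ≤ (k:ℝ) := Nat.cast_nonneg k
    have hT'pos : (0:ℝ) < (T':ℝ) := by linarith
    have h5 : (0:ℝ) < (T':ℝ) - k := by linarith
    have habs1 := (abs_le.1 habs).2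
    have hX : N k + ((T':ℝ) - k) * M k ≤ (T':ℝ)/4 := by
      have := mul_le_mul_of_nonneg_left habs1 (le_of_lt hT'pos)
      rw [← mul_assoc, mul_inv_cancel₀ (ne_of_gt hT'pos), one_mul] at this
      linarith
    have hMle : M k * ((T':ℝ) - k) ≤ (T':ℝ)/4 + k := by linarith [hNk'.1]
    have := (le_div_iff₀ h5).2 hMle
    have hfin : ((T':ℝ)/4 + k) / ((T':ℝ) - k) ≤ 3/10 := by
      rw [div_le_iff₀ h5]; linarith
    linarith
  have hNle : ∀ j, N j ≤ -(2/5) * j := by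
    intro j
    induction j with
    | zero => simp [hN, expTotal]
    | succ j ih =>
      have e : N (j+1) = N j + (2 * M j - 1) := by rw [hMdef]; ring
      have := hM j
      rw [e]; push_cast; linarith
  set T := max T₀ 1 with hT
  have hT1 : 1 ≤ T := le_max_right _ _
  have hTpos : (0:ℝ) < (T:ℝ) := by exact_mod_cast Nat.lt_of_lt_of_le Nat.zero_lt_one hT1
  have habs := hH T (le_max_left _ _) never never_valid
  rw [avg] at habs
  have h1 := hNle T
  have h2 := (abs_le.1 habs).1
  -- T⁻¹ * N T ≥ -(1/4) but N T ≤ -(2/5) T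
  have h3 : expTotal σ never T [] ≤ -(2/5) * T := h1
  have h4 : (T:ℝ)⁻¹ * expTotal σ never T [] ≤ (T:ℝ)⁻¹ * (-(2/5) * T) :=
    mul_le_mul_of_nonneg_left h3 (by positivity)
  rw [show (T:ℝ)⁻¹ * (-(2/5) * (T:ℝ)) = -(2/5) * ((T:ℝ)⁻¹ * T) by ring,
    inv_mul_cancel₀ (ne_of_gt hTpos)] at h4
  norm_num at h4
  linarith

/-- the pure action R of player 2 -/
def yR : Bool → ℝ := fun j => if j then 0 else 1

lemma yR_mem : yR ∈ stdSimplex ℝ Bool := by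
  constructor
  · intro j; unfold yR; cases j <;> norm_num
  · simp [yR, Fintype.sum_bool]

lemma phi_yR (x α β : Bool → ℝ) (hx : x ∈ stdSimplex ℝ Bool) :
    phi x α yR β = (1 + β true)⁻¹ * (x true - x false + x true * β true) := by
  have hsum : x true + x false = 1 := by
    have := hx.2; rwa [Fintype.sum_bool] at this
  unfold phi pstar gstar mix yR g
  rw [Fintype.sum_bool, Fintype.sum_bool, Fintype.sum_bool, Fintype.sum_bool,
    Fintype.sum_bool, Fintype.sum_bool, Fintype.sum_bool, Fintype.sum_bool]
  norm_num
  rw [show x true * β true + x false * β true = (x true + x false) * β true by ring, hsum]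
  ring_nf

/-- upper bound: |φ(x,α,yR,β)| ≤ 1 -/
lemma phi_yR_abs_le (x α β : Bool → ℝ) (hx : x ∈ stdSimplex ℝ Bool)
    (hβ : ∀ j, 0 ≤ β j) : |phi x α yR β| ≤ 1 := by
  have hsum : x true + x false = 1 := by
    have := hx.2; rwa [Fintype.sum_bool] at this
  have h0t := hx.1 true
  have h0f := hx.1 false
  have hb := hβ true
  rw [phi_yR x α β hx]
  rw [abs_mul, abs_inv]
  have h1 : (0:ℝ) < 1 + β true := by linarith
  rw [abs_of_pos h1]
  rw [inv_mul_le_iff₀ h1, mul_one]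
  have := abs_le.2 (show -(1 + β true) ≤ x true - x false + x true * β true ∧
      x true - x false + x true * β true ≤ 1 + β true by
    constructor <;> nlinarith)
  linarith [this]

/-- the pure action T of player 1 -/
def xT : Bool → ℝ := fun i => if i then 1 else 0

lemma xT_mem : xT ∈ stdSimplex ℝ Bool := by
  constructor
  · intro i; unfold xT; cases i <;> norm_num
  · simp [xT, Fintype.sum_bool]

lemma phi_xT (y β : Bool → ℝ) (hy : y ∈ stdSimplex ℝ Bool) (hβ : ∀ j, 0 ≤ β j) :
    phi xT 0 y β = 1 := by
  have hsum : y true + y false = 1 := by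
    have := hy.2; rwa [Fintype.sum_bool] at this
  have hb := hβ true
  unfold phi pstar gstar mix xT g
  rw [Fintype.sum_bool, Fintype.sum_bool, Fintype.sum_bool, Fintype.sum_bool,
    Fintype.sum_bool, Fintype.sum_bool, Fintype.sum_bool, Fintype.sum_bool]
  norm_num
  rw [show y true + y false + β true = 1 + β true by linarith]
  rw [inv_mul_cancel₀ (by linarith : (1:ℝ) + β true ≠ 0)]

instance : Nonempty (stdSimplex ℝ Bool) := ⟨⟨yR, yR_mem⟩⟩
instance : Nonempty {a : Bool → ℝ // ∀ i, 0 ≤ a i} := ⟨⟨0, fun _ => le_refl 0⟩⟩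

lemma infDist_zero (r : ℝ) : Metric.infDist r ({0} : Set ℝ) = |r| := by
  rw [Metric.infDist_singleton, Real.dist_eq, sub_zero]

lemma inner_nonneg (y : stdSimplex ℝ Bool) (x : stdSimplex ℝ Bool)
    (α : {a : Bool → ℝ // ∀ i, 0 ≤ a i}) :
    0 ≤ ⨆ β : {b : Bool → ℝ // ∀ j, 0 ≤ b j},
      Metric.infDist (phi x.1 α.1 y.1 β.1) ({0} : Set ℝ) :=
  Real.iSup_nonneg (fun β => Metric.infDist_nonneg)

/-- inner value function of condition (1) -/
def innerVal (y : stdSimplex ℝ Bool) : ℝ :=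
  ⨅ x : stdSimplex ℝ Bool, ⨅ α : {a : Bool → ℝ // ∀ i, 0 ≤ a i},
    ⨆ β : {b : Bool → ℝ // ∀ j, 0 ≤ b j},
      Metric.infDist (phi x.1 α.1 y.1 β.1) ({0} : Set ℝ)

lemma innerVal_le_one (y : stdSimplex ℝ Bool) : innerVal y ≤ 1 := by
  unfold innerVal
  have hb : BddBelow (Set.range fun x : stdSimplex ℝ Bool =>
      ⨅ α : {a : Bool → ℝ // ∀ i, 0 ≤ a i}, ⨆ β : {b : Bool → ℝ // ∀ j, 0 ≤ b j},
        Metric.infDist (phi x.1 α.1 y.1 β.1) ({0} : Set ℝ)) := by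
    refine ⟨0, ?_⟩
    rintro r ⟨x, rfl⟩
    exact le_ciInf (fun α => inner_nonneg y x α)
  refine ciInf_le_of_le hb ⟨xT, xT_mem⟩ ?_
  have hb2 : BddBelow (Set.range fun α : {a : Bool → ℝ // ∀ i, 0 ≤ a i} =>
      ⨆ β : {b : Bool → ℝ // ∀ j, 0 ≤ b j},
        Metric.infDist (phi xT α.1 y.1 β.1) ({0} : Set ℝ)) := by
    refine ⟨0, ?_⟩
    rintro r ⟨α, rfl⟩
    exact inner_nonneg y ⟨xT, xT_mem⟩ α
  refine ciInf_le_of_le hb2 ⟨0, fun _ => le_refl 0⟩ ?_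
  apply ciSup_le
  intro β
  rw [phi_xT y.1 β.1 y.2 β.2, infDist_zero]
  norm_num

lemma innerVal_yR : (1:ℝ)/3 ≤ innerVal ⟨yR, yR_mem⟩ := by
  unfold innerVal
  refine le_ciInf (fun x => le_ciInf (fun α => ?_))
  -- sup over β of |phi x α yR β| ≥ 1/3
  have hBdd : BddAbove (Set.range fun β : {b : Bool → ℝ // ∀ j, 0 ≤ b j} =>
      Metric.infDist (phi x.1 α.1 yR β.1) ({0} : Set ℝ)) := by
    refine ⟨1, ?_⟩
    rintro r ⟨β, rfl⟩
    dsimp only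
    rw [infDist_zero]
    exact phi_yR_abs_le x.1 α.1 β.1 x.2 β.2
  have hsum : x.1 true + x.1 false = 1 := by
    have := x.2.2; rwa [Fintype.sum_bool] at this
  have h0t := x.2.1 true
  have h0f := x.2.1 false
  rcases le_or_gt (x.1 true) (1/3) with hc | hc
  · -- β = 0
    refine le_trans ?_ (le_ciSup hBdd ⟨0, fun _ => le_refl 0⟩)
    rw [infDist_zero, phi_yR x.1 α.1 0 x.2]
    simp only [Pi.zero_apply]
    rw [show x.1 true - x.1 false + x.1 true * 0 = x.1 true - x.1 false by ring]
    norm_num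
    rw [abs_of_nonpos (by linarith)]
    linarith
  · rcases le_or_gt (x.1 true) (2/3) with hc2 | hc2
    · -- β true = (4 - 6 xT)/(3 xT - 1)
      set b : ℝ := (4 - 6 * x.1 true) / (3 * x.1 true - 1) with hbdef
      have hd : (0:ℝ) < 3 * x.1 true - 1 := by linarith
      have hbn : 0 ≤ b := div_nonneg (by linarith) (le_of_lt hd)
      have hβm : ∀ j, 0 ≤ (fun j : Bool => if j then b else 0) j := by
        intro j; cases j <;> simp [hbn]
      refine le_trans ?_ (le_ciSup hBdd ⟨(fun j : Bool => if j then b else 0), hβm⟩)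
      dsimp only
      rw [infDist_zero, phi_yR x.1 α.1 _ x.2]
      simp only [if_pos]
      have hd' : (3 * x.1 true - 1) ≠ 0 := ne_of_gt hd
      have h3 : (0:ℝ) < 3 - 3 * x.1 true := by linarith
      have h3' : (3:ℝ) - 3 * x.1 true ≠ 0 := ne_of_gt h3
      have hxf : x.1 false = 1 - x.1 true := by linarith
      have hphi : (1 + b)⁻¹ * (x.1 true - x.1 false + x.1 true * b) = 1/3 := by
        have h1b : 1 + b = (3 - 3 * x.1 true) / (3 * x.1 true - 1) := by
          rw [hbdef, eq_div_iff hd', add_mul, div_mul_cancel₀ _ hd']; ring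
        rw [h1b, hxf, hbdef, inv_div]
        field_simp
        have h1x : (1:ℝ) - x.1 true ≠ 0 := ne_of_gt (by linarith)
        rw [div_eq_one_iff_eq h1x]; ring
      rw [hphi, abs_of_nonneg (by norm_num : (0:ℝ) ≤ 1/3)]
    · -- β = 0
      refine le_trans ?_ (le_ciSup hBdd ⟨0, fun _ => le_refl 0⟩)
      rw [infDist_zero, phi_yR x.1 α.1 0 x.2]
      simp only [Pi.zero_apply]
      rw [show x.1 true - x.1 false + x.1 true * 0 = x.1 true - x.1 false by ring]
      norm_num
      rw [abs_of_nonneg (by linarith)]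
      linarith

lemma cond1_ge : (1:ℝ)/3 ≤ cond1Val ({0} : Set ℝ) := by
  have hBdd : BddAbove (Set.range innerVal) := by
    refine ⟨1, ?_⟩
    rintro r ⟨y, rfl⟩
    exact innerVal_le_one y
  exact le_trans innerVal_yR (le_ciSup hBdd ⟨yR, yR_mem⟩)

/-- the oblivious strategy for horizon T: play `T` w.p. (stage-1)/(T-1). -/
def wstrat (T : ℕ) : List Bool → ℝ := fun h => min ((h.length : ℝ) / ((T : ℝ) - 1)) 1

lemma wstrat_valid (T : ℕ) (hT : 2 ≤ T) : ValidStrat (wstrat T) := by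
  intro h
  have h1 : (0:ℝ) ≤ (T:ℝ) - 1 := by
    have : (2:ℝ) ≤ (T:ℝ) := by exact_mod_cast hT
    linarith
  constructor
  · exact le_min (div_nonneg (Nat.cast_nonneg _) h1) zero_le_one
  · exact min_le_right _ _

lemma wkey (T : ℕ) (hT : 2 ≤ T) (τ : List Bool → ℝ) :
    ∀ n h, h.length + n = T →
      expTotal (wstrat T) τ n h = (n : ℝ) - n * ((n:ℝ) - 1) / ((T:ℝ) - 1) := by
  have hT1 : (1:ℝ) ≤ (T:ℝ) - 1 := by
    have : (2:ℝ) ≤ (T:ℝ) := by exact_mod_cast hT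
    linarith
  have hTne : ((T:ℝ) - 1) ≠ 0 := by linarith
  intro n
  induction n with
  | zero => intro h _; simp [expTotal]
  | succ n ih =>
    intro h hlen
    have hlR : (h.length : ℝ) = (T:ℝ) - 1 - n := by
      have : ((h.length : ℕ) : ℝ) + ((n:ℝ) + 1) = (T:ℝ) := by exact_mod_cast hlen
      linarith
    have hs : wstrat T h = ((T:ℝ) - 1 - n) / ((T:ℝ) - 1) := by
      unfold wstrat
      rw [hlR, min_eq_left]
      rw [div_le_one (by linarith)]
      have : (0:ℝ) ≤ n := Nat.cast_nonneg n
      linarith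
    have iht : expTotal (wstrat T) τ n (h ++ [true]) = (n : ℝ) - n * ((n:ℝ) - 1) / ((T:ℝ) - 1) := by
      apply ih; simp at hlen ⊢; omega
    have ihf : expTotal (wstrat T) τ n (h ++ [false]) = (n : ℝ) - n * ((n:ℝ) - 1) / ((T:ℝ) - 1) := by
      apply ih; simp at hlen ⊢; omega
    show expTotal (wstrat T) τ (n+1) h = _
    rw [expTotal, iht, ihf, hs]
    simp only [g]
    norm_num
    field_simp
    ring

lemma wavg (T : ℕ) (hT : 2 ≤ T) (τ : List Bool → ℝ) : avg (wstrat T) τ T = 0 := by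
  have hTne : ((T:ℝ) - 1) ≠ 0 := by
    have : (2:ℝ) ≤ (T:ℝ) := by exact_mod_cast hT
    linarith
  unfold avg
  rw [wkey T hT τ T [] (by simp)]
  field_simp
  norm_num


/-- (i) `C = {0}` does not satisfy Condition (1) — equivalently, there is
no `x ∈ Δ({T,B})` with `g(x,R) = 0` and `g(x,L*) = 0` — yet (ii) `{0}` is weakly
approachable by player 1; hence `{0}` is weakly but not uniformly approachable. -/
theorem zero_weakly_but_not_uniformly_approachable :
    cond1Val ({0} : Set ℝ) ≠ 0 ∧
    (¬ ∃ x ∈ stdSimplex ℝ Bool,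
        x true * g true false + x false * g false false = 0 ∧
        x true * g true true + x false * g false true = 0) ∧
    WeaklyApproachableZero ∧
    ¬ UniformlyApproachableZero := by
  refine ⟨?_, ?_, ?_, not_unif⟩
  · have h := cond1_ge
    intro h0
    rw [h0] at h
    norm_num at h
  · rintro ⟨x, hx, h1, h2⟩
    have hs : x true + x false = 1 := by
      have := hx.2; rwa [Fintype.sum_bool] at this
    rw [gTR, gBR] at h1
    rw [gTT, gBT] at h2
    linarith
  · intro ε hε
    refine ⟨2, fun T hT => ⟨wstrat T, wstrat_valid T hT, fun τ _ => ?_⟩⟩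
    rw [wavg T hT τ]
    simp only [abs_zero]
    linarith

end Example5

end
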